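/- arXiv:1312.5499 — 9 statements merged into one kernel-verified Lean document; each statement's English description precedes it below -/
import Mathlib

section
/- For each b ∈ ℂ, the vector space ℂ[h] carries an sl₂(ℂ)-module structure M_b in which h acts as multiplication by h, the element e = e_{1,2} acts by (e·f)(h) = (h+b)·f(h-1), and the element f = e_{2,1} acts by (f·g)(h) = -(h-b)·g(h+1). In particular the bracket relation [e,f]·g = 2h·g holds for all g ∈ ℂ[h]. -/
open Polynomial
/-- For each `b ∈ ℂ`, the operators on `ℂ[h]` given by `h·f = hf`,
`e·f = (h+b)f(h-1)`, `f·g = -(h-b)g(h+1)` satisfy the `sl₂` bracket relations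
`[h,e] = e`, `[h,f] = -f` and, in particular, `[e,f]·g = 2h·g`; i.e. they define
an `sl₂(ℂ)`-module structure `M_b` on `ℂ[h]`. -/
theorem Mb_is_sl2_module (b : ℂ) :
    let E : ℂ[X] → ℂ[X] := fun f => (X + C b) * f.comp (X - 1)
    let F : ℂ[X] → ℂ[X] := fun g => -(X - C b) * g.comp (X + 1)
    let H : ℂ[X] → ℂ[X] := fun f => X * f
    (∀ g : ℂ[X], H (E g) - E (H g) = E g) ∧
    (∀ g : ℂ[X], H (F g) - F (H g) = -(F g)) ∧
    (∀ g : ℂ[X], E (F g) - F (E g) = 2 * (H g)) := by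
  intro E F H
  refine ⟨fun g => ?_, fun g => ?_, fun g => ?_⟩ <;>
    simp only [E, F, H, mul_comp, add_comp, sub_comp, neg_comp, X_comp, C_comp, one_comp]
  · ring
  · ring
  · rw [comp_assoc, comp_assoc]
    simp only [add_comp, sub_comp, X_comp, one_comp]
    rw [show ((X:ℂ[X]) + 1 - 1) = X by ring, show ((X:ℂ[X]) - 1 + 1) = X by ring, comp_X]
    ring
end

section
/- For each b ∈ ℂ, the vector space ℂ[h] carries an sl₂(ℂ)-module structure M'_b in which h acts as multiplication by h, e = e_{1,2} acts by (e·f)(h) = f(h-1), and f = e_{2,1} acts by (f·g)(h) = -(h+b+1)(h-b)·g(h+1). In particular [e,f]·g = 2h·g for all g ∈ ℂ[h]. -/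
open Polynomial

/-- For each `b ∈ ℂ`, the operators on `ℂ[h]` given by `h·f = hf`,
`e·f = f(h-1)`, `f·g = -(h+b+1)(h-b)g(h+1)` satisfy the `sl₂` bracket relations
`[h,e] = e`, `[h,f] = -f` and, in particular, `[e,f]·g = 2h·g`; i.e. they define
an `sl₂(ℂ)`-module structure `M'_b` on `ℂ[h]`. -/
theorem Mb'_is_sl2_module (b : ℂ) :
    let E : ℂ[X] → ℂ[X] := fun f => f.comp (X - 1)
    let F : ℂ[X] → ℂ[X] := fun g => -((X + C b + 1) * (X - C b)) * g.comp (X + 1)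
    let H : ℂ[X] → ℂ[X] := fun f => X * f
    (∀ g : ℂ[X], H (E g) - E (H g) = E g) ∧
    (∀ g : ℂ[X], H (F g) - F (H g) = -(F g)) ∧
    (∀ g : ℂ[X], E (F g) - F (E g) = 2 * (H g)) := by
  intro E F H
  refine ⟨fun g => ?_, fun g => ?_, fun g => ?_⟩ <;>
    simp only [E, F, H, mul_comp, neg_comp, add_comp, sub_comp, X_comp, C_comp, one_comp,
      comp_assoc, comp_X] <;> ring_nf <;> simp [comp_X]
end

section
/- The sl₂(ℂ)-module M'_b on ℂ[h] (with h acting by multiplication, e acting by f(h) ↦ f(h-1), and f acting by g(h) ↦ -(h+b+1)(h-b)g(h+1)) is a simple module for every b ∈ ℂ. -/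
open Polynomial

/-- The `sl₂(ℂ)`-module `M'_b` on `ℂ[h]` (with `h` acting by multiplication,
`e` by `f(h) ↦ f(h-1)` and `f` by `g(h) ↦ -(h+b+1)(h-b)g(h+1)`) is simple for
every `b ∈ ℂ`: any nonzero subspace invariant under the three actions is everything. -/
theorem Mb'_simple (b : ℂ) (V : Submodule ℂ ℂ[X])
    (hH : ∀ f ∈ V, X * f ∈ V)
    (hE : ∀ f ∈ V, f.comp (X - 1) ∈ V)
    (hF : ∀ f ∈ V, -((X + C b + 1) * (X - C b)) * f.comp (X + 1) ∈ V)
    (hV : V ≠ ⊥) : V = ⊤ := by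
  -- V is closed under multiplication by arbitrary polynomials
  have hmul : ∀ p : ℂ[X], ∀ f ∈ V, p * f ∈ V := by
    intro p
    induction p using Polynomial.induction_on' with
    | add p q hp hq =>
      intro f hf
      rw [add_mul]; exact V.add_mem (hp f hf) (hq f hf)
    | monomial n a =>
      intro f hf
      have hx : ∀ m : ℕ, X ^ m * f ∈ V := by
        intro m
        induction m with
        | zero => simpa using hf
        | succ k ih =>
          rw [pow_succ, mul_comm (X ^ k) X, mul_assoc]
          exact hH _ ih
      rw [← C_mul_X_pow_eq_monomial, mul_assoc]
      simpa [Polynomial.smul_eq_C_mul] using V.smul_mem a (hx n)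
  -- package V as an ideal
  let I : Ideal ℂ[X] :=
    { carrier := V
      add_mem' := fun h1 h2 => V.add_mem h1 h2
      zero_mem' := V.zero_mem
      smul_mem' := fun p f hf => by simpa [smul_eq_mul] using hmul p f hf }
  have hVI : ∀ f : ℂ[X], f ∈ V ↔ f ∈ I := fun _ => Iff.rfl
  set g : ℂ[X] := Submodule.IsPrincipal.generator I with hgdef
  have hgmem : g ∈ I := Submodule.IsPrincipal.generator_mem I
  have hspan : Ideal.span {g} = I := Ideal.span_singleton_generator I
  have hg0 : g ≠ 0 := by
    intro h
    apply hV
    ext f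
    simp only [Submodule.mem_bot]
    constructor
    · intro hf
      have : f ∈ Ideal.span ({g} : Set ℂ[X]) := hspan ▸ (hVI f).mp hf
      rw [h, Ideal.span_singleton_eq_bot.mpr rfl] at this
      simpa using this
    · rintro rfl; exact V.zero_mem
  -- g divides g.comp (X - 1)
  have hcompmem : g.comp (X - 1) ∈ I := (hVI _).mp (hE g ((hVI g).mpr hgmem))
  have hdvd : g ∣ g.comp (X - 1) := by
    rw [← Ideal.mem_span_singleton, hspan]; exact hcompmem
  obtain ⟨q, hq⟩ := hdvd
  have hX1 : (X - 1 : ℂ[X]) = X - C 1 := by rw [map_one]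
  have hcompne : g.comp (X - 1) ≠ 0 := by
    intro h
    rw [hX1] at h
    have hlc : (g.comp (X - C 1)).leadingCoeff = g.leadingCoeff * (X - C 1 : ℂ[X]).leadingCoeff ^ g.natDegree :=
      Polynomial.leadingCoeff_comp (by rw [natDegree_X_sub_C]; norm_num)
    rw [h, leadingCoeff_zero, (monic_X_sub_C (1 : ℂ)).leadingCoeff, one_pow, mul_one] at hlc
    exact hg0 (leadingCoeff_eq_zero.mp hlc.symm)
  have hqne : q ≠ 0 := by
    rintro rfl
    rw [mul_zero] at hq
    exact hcompne hq
  -- q has degree 0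
  have hdeg : g.natDegree + q.natDegree = g.natDegree := by
    have h1 : (g.comp (X - 1)).natDegree = g.natDegree := by
      rw [hX1, Polynomial.natDegree_comp, natDegree_X_sub_C, mul_one]
    rw [← Polynomial.natDegree_mul hg0 hqne, ← hq, h1]
  have hqdeg : q.natDegree = 0 := by omega
  obtain ⟨c, rfl⟩ : ∃ c, q = C c := ⟨q.coeff 0, Polynomial.eq_C_of_natDegree_eq_zero hqdeg⟩
  -- leading coefficients force c = 1
  have hc1 : c = 1 := by
    have hlc : (g.comp (X - C 1)).leadingCoeff = g.leadingCoeff * (X - C 1 : ℂ[X]).leadingCoeff ^ g.natDegree :=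
      Polynomial.leadingCoeff_comp (by rw [natDegree_X_sub_C]; norm_num)
    rw [(monic_X_sub_C (1 : ℂ)).leadingCoeff, one_pow, mul_one, ← hX1, hq, leadingCoeff_mul,
      leadingCoeff_C] at hlc
    have hglc : g.leadingCoeff ≠ 0 := leadingCoeff_ne_zero.mpr hg0
    exact mul_left_cancel₀ hglc (hlc.trans (mul_one _).symm)
  rw [hc1, map_one, mul_one] at hq
  -- periodicity: g.eval (x - 1) = g.eval x
  have heval : ∀ x : ℂ, g.eval (x - 1) = g.eval x := by
    intro x
    have := congrArg (Polynomial.eval x) hq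
    simpa [Polynomial.eval_comp] using this
  -- hence g takes the same value at all naturals; so g is constant
  have hnat : ∀ n : ℕ, g.eval (n : ℂ) = g.eval 0 := by
    intro n
    induction n with
    | zero => simp
    | succ k ih =>
      have := heval ((k : ℂ) + 1)
      push_cast
      rw [← ih]
      simpa using this.symm
  have hconst : g = C (g.eval 0) := by
    have hzero : g - C (g.eval 0) = 0 := by
      apply Polynomial.eq_zero_of_infinite_isRoot
      apply Set.infinite_of_injective_forall_mem (f := fun n : ℕ => (n : ℂ))
        Nat.cast_injective
      intro n
      simp only [Set.mem_setOf_eq, IsRoot, Polynomial.eval_sub, Polynomial.eval_C]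
      rw [hnat n, sub_self]
    exact sub_eq_zero.mp hzero
  obtain ⟨c0, hgC⟩ : ∃ c0, g = C c0 := ⟨_, hconst⟩
  have hc0 : c0 ≠ 0 := by
    intro h
    apply hg0
    rw [hgC, h, map_zero]
  -- conclude V = ⊤
  ext f
  simp only [Submodule.mem_top, iff_true]
  have hmem := hmul (C c0⁻¹ * f) g ((hVI g).mpr hgmem)
  rw [hgC] at hmem
  have heq : C c0⁻¹ * f * C c0 = f := by
    rw [mul_comm, ← mul_assoc, ← map_mul, mul_inv_cancel₀ hc0, map_one, one_mul]
  rwa [heq] at hmem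
end

section
/- If 2b is not a nonnegative integer, then the sl₂(ℂ)-module M_b on ℂ[h] (h acting by multiplication, e·f(h) = (h+b)f(h-1), f·g(h) = -(h-b)g(h+1)) is simple. -/
open Polynomial

/-- If `2b` is not a nonnegative integer, then the `sl₂(ℂ)`-module `M_b` on `ℂ[h]`
(`h` acting by multiplication, `e·f(h) = (h+b)f(h-1)`, `f·g(h) = -(h-b)g(h+1)`) is
simple: any nonzero subspace invariant under the three actions is everything. -/
theorem Mb_simple (b : ℂ) (hb : ∀ m : ℕ, 2 * b ≠ (m : ℂ)) (V : Submodule ℂ ℂ[X])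
    (hH : ∀ f ∈ V, X * f ∈ V)
    (hE : ∀ f ∈ V, (X + C b) * f.comp (X - 1) ∈ V)
    (hF : ∀ f ∈ V, -(X - C b) * f.comp (X + 1) ∈ V)
    (hV : V ≠ ⊥) : V = ⊤ := by
  -- V is closed under multiplication by X^n
  have hXn : ∀ (n : ℕ), ∀ f ∈ V, X ^ n * f ∈ V := by
    intro n
    induction n with
    | zero => intro f hf; simpa using hf
    | succ n ih =>
      intro f hf
      have := hH _ (ih f hf)
      rw [← mul_assoc] at this
      rw [pow_succ, mul_comm (X ^ n) X]
      exact this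
  -- V is closed under multiplication by arbitrary polynomials
  have hmul : ∀ p : ℂ[X], ∀ f ∈ V, p * f ∈ V := by
    intro p
    induction p using Polynomial.induction_on' with
    | add p q hp hq =>
      intro f hf
      rw [add_mul]
      exact V.add_mem (hp f hf) (hq f hf)
    | monomial n a =>
      intro f hf
      have : (monomial n a) * f = a • (X ^ n * f) := by
        rw [smul_eq_C_mul, ← mul_assoc, C_mul_X_pow_eq_monomial]
      rw [this]
      exact V.smul_mem a (hXn n f hf)
  -- V is an ideal
  set I : Ideal ℂ[X] :=
    { carrier := V
      add_mem' := fun ha hb => V.add_mem ha hb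
      zero_mem' := V.zero_mem
      smul_mem' := fun p f hf => by simpa [smul_eq_mul] using hmul p f hf } with hI
  have hmemI : ∀ x : ℂ[X], x ∈ I ↔ x ∈ V := fun x => Iff.rfl
  obtain ⟨g, hg⟩ : Submodule.IsPrincipal I := inferInstance
  have hgV : g ∈ V := by
    rw [← hmemI, hg]
    exact Ideal.subset_span rfl
  have hdvd : ∀ x ∈ V, g ∣ x := by
    intro x hx
    rw [← hmemI, hg, Ideal.submodule_span_eq, Ideal.mem_span_singleton] at hx
    exact hx
  have hg0 : g ≠ 0 := by
    intro h
    apply hV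
    rw [Submodule.eq_bot_iff]
    intro x hx
    obtain ⟨c, hc⟩ := hdvd x hx
    rw [hc, h, zero_mul]
  -- root recursion relations
  have relE : ∀ r : ℂ, g.eval r = 0 → (r + b) * g.eval (r - 1) = 0 := by
    intro r hr
    obtain ⟨q, hq⟩ := hdvd _ (hE g hgV)
    have h := congrArg (Polynomial.eval r) hq
    simp only [eval_mul, eval_add, eval_sub, eval_X, eval_C, eval_comp, eval_one,
      hr, mul_zero] at h
    linear_combination h
  have relF : ∀ r : ℂ, g.eval r = 0 → (r - b) * g.eval (r + 1) = 0 := by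
    intro r hr
    obtain ⟨q, hq⟩ := hdvd _ (hF g hgV)
    have h := congrArg (Polynomial.eval r) hq
    simp only [eval_mul, eval_neg, eval_add, eval_sub, eval_X, eval_C, eval_comp,
      eval_one, hr, mul_zero] at h
    linear_combination -h
  have hroots : {x : ℂ | g.IsRoot x}.Finite := Polynomial.finite_setOf_isRoot hg0
  -- g has degree 0
  have hdeg : g.natDegree = 0 := by
    by_contra hne
    have hdpos : 0 < g.degree :=
      natDegree_pos_iff_degree_pos.mp (Nat.pos_of_ne_zero hne)
    obtain ⟨r, hr⟩ := Complex.exists_root hdpos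
    -- descent: -b is a root
    have hnb : g.eval (-b) = 0 := by
      by_contra hnb
      have hall : ∀ k : ℕ, g.eval (r - k) = 0 := by
        intro k
        induction k with
        | zero => simpa using hr
        | succ k ih =>
          have h1 := relE _ ih
          have h2 : r - (k : ℂ) + b ≠ 0 := by
            intro h
            apply hnb
            have : r - (k : ℂ) = -b := by linear_combination h
            rw [← this]; exact ih
          have h3 : g.eval (r - (k : ℂ) - 1) = 0 := by
            rcases mul_eq_zero.mp h1 with h | h
            · exact absurd h h2
            · exact h
          have : r - ((k : ℂ) + 1) = r - (k : ℂ) - 1 := by ring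
          rw [Nat.cast_succ, this]
          exact h3
      have hinj : Function.Injective (fun k : ℕ => r - (k : ℂ)) := by
        intro a c h
        simp only [sub_right_inj, Nat.cast_inj] at h
        exact h
      exact absurd (Set.infinite_of_injective_forall_mem hinj
        (fun k => hall k)) hroots.not_infinite
    -- ascent: all -b + m are roots
    have hall : ∀ m : ℕ, g.eval (-b + m) = 0 := by
      intro m
      induction m with
      | zero => simpa using hnb
      | succ m ih =>
        have h1 := relF _ ih
        have h2 : -b + (m : ℂ) - b ≠ 0 := by
          intro h
          exact hb m (by linear_combination -h)
        have h3 : g.eval (-b + (m : ℂ) + 1) = 0 := by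
          rcases mul_eq_zero.mp h1 with h | h
          · exact absurd h h2
          · exact h
        have : -b + ((m : ℂ) + 1) = -b + (m : ℂ) + 1 := by ring
        rw [Nat.cast_succ, this]
        exact h3
    have hinj : Function.Injective (fun m : ℕ => -b + (m : ℂ)) := by
      intro a c h
      simp only [add_right_inj, Nat.cast_inj] at h
      exact h
    exact absurd (Set.infinite_of_injective_forall_mem hinj
      (fun m => hall m)) hroots.not_infinite
  -- g is a nonzero constant, so V = ⊤
  obtain ⟨a, ha⟩ : ∃ a, g = C a := ⟨_, eq_C_of_natDegree_eq_zero hdeg⟩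
  have ha0 : a ≠ 0 := by
    intro h
    apply hg0
    rw [ha, h, map_zero]
  rw [eq_top_iff]
  intro p _
  have hkey : (C a⁻¹ * p) * g ∈ V := hmul _ g hgV
  rw [ha] at hkey
  have heq : (C a⁻¹ * p) * C a = p := by
    rw [mul_comm (C a⁻¹) p, mul_assoc, ← C_mul, inv_mul_cancel₀ ha0, map_one, mul_one]
  rwa [heq] at hkey
end

section
/- If 2b is a nonnegative integer, then the subspace S := ℂ[h]·Q, where Q = ∏_{j=0}^{2b}(h + b - j), is an sl₂(ℂ)-submodule of M_b, and the map f ↦ f·Q is an isomorphism of sl₂-modules from M_{-b-1} onto S. -/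
open Polynomial

/-- If `2b ∈ ℕ₀`, then `S := ℂ[h]·Q` with `Q = ∏_{j=0}^{2b}(h+b-j)` is an
`sl₂(ℂ)`-submodule of `M_b`, and `f ↦ f·Q` is an isomorphism of `sl₂`-modules
from `M_{-b-1}` onto `S`: it is injective, surjective onto `S` by definition, and
intertwines the actions of `h`, `e` and `f`. -/
theorem Mb_submodule_iso (b : ℂ) (m : ℕ) (hb : 2 * b = (m : ℂ)) :
    let Q : ℂ[X] := ∏ j ∈ Finset.range (m + 1), (X + C b - C (j : ℂ))
    Function.Injective (fun f : ℂ[X] => f * Q) ∧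
    (∀ f : ℂ[X], X * (f * Q) = (X * f) * Q) ∧
    (∀ f : ℂ[X],
      (X + C b) * ((f * Q).comp (X - 1)) = ((X + C (-b - 1)) * f.comp (X - 1)) * Q) ∧
    (∀ f : ℂ[X],
      -(X - C b) * ((f * Q).comp (X + 1)) = (-(X - C (-b - 1)) * f.comp (X + 1)) * Q) := by
  intro Q
  have hQ0 : Q ≠ 0 := by
    apply Finset.prod_ne_zero_iff.2
    intro j _
    intro h
    have := congrArg (fun p : ℂ[X] => p.coeff 1) h
    simp [coeff_X] at this
  have hkey1 : (X + C b) * Q.comp (X - 1) = (X + C (-b - 1)) * Q := by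
    have h1 : Q.comp (X - 1) =
        ∏ j ∈ Finset.range (m + 1), (X + C b - C ((j : ℂ) + 1)) := by
      rw [show Q.comp (X - 1) = ∏ j ∈ Finset.range (m + 1),
          (X + C b - C (j : ℂ)).comp (X - 1) from prod_comp _ _ _]
      refine Finset.prod_congr rfl fun j _ => ?_
      simp [comp, eval₂, sub_comp, add_comp]
      ring
    have h2 : (∏ j ∈ Finset.range (m + 2), (X + C b - C (j : ℂ))) =
        (∏ j ∈ Finset.range (m + 1), (X + C b - C ((j : ℂ) + 1))) * (X + C b) := by
      rw [Finset.prod_range_succ']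
      simp only [Nat.cast_add, Nat.cast_one, Nat.cast_zero, map_zero, sub_zero]
    have h3 : (∏ j ∈ Finset.range (m + 2), (X + C b - C (j : ℂ))) =
        Q * (X + C b - C ((m : ℂ) + 1)) := by
      rw [Finset.prod_range_succ]
      push_cast
      rfl
    have hc : C b - C ((m : ℂ) + 1) = C (-b - 1) := by
      rw [← C_sub]; congr 1; rw [← hb]; ring
    rw [h1, mul_comm, ← h2, h3, add_sub_assoc, hc]
    ring
  have hkey2 : (X - C b) * Q.comp (X + 1) = (X + C b + 1) * Q := by
    have h1 : Q.comp (X + 1) =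
        ∏ j ∈ Finset.range (m + 1), (X + C (b + 1) - C (j : ℂ)) := by
      rw [show Q.comp (X + 1) = ∏ j ∈ Finset.range (m + 1),
          (X + C b - C (j : ℂ)).comp (X + 1) from prod_comp _ _ _]
      refine Finset.prod_congr rfl fun j _ => ?_
      simp [sub_comp, add_comp, C_add]
      ring
    have h2 : (∏ j ∈ Finset.range (m + 2), (X + C (b + 1) - C (j : ℂ))) =
        Q * (X + C (b + 1)) := by
      rw [Finset.prod_range_succ']
      congr 1
      · refine Finset.prod_congr rfl fun j _ => ?_
        push_cast [C_add]
        ring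
      · simp
    have h3 : (∏ j ∈ Finset.range (m + 2), (X + C (b + 1) - C (j : ℂ))) =
        (∏ j ∈ Finset.range (m + 1), (X + C (b + 1) - C (j : ℂ))) *
          (X + C (b + 1) - C ((m : ℂ) + 1)) := by
      rw [Finset.prod_range_succ]
      push_cast
      rfl
    have hc : C (b + 1) - C ((m : ℂ) + 1) = C (-b) := by
      rw [← C_sub]; congr 1; rw [← hb]; ring
    have h4 : X + C (b + 1) - C ((m : ℂ) + 1) = X - C b := by
      rw [add_sub_assoc, hc, map_neg]; ring
    rw [h1, ← h4, mul_comm, ← h3, h2, C_add, C_1]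
    ring
  refine ⟨fun a c h => mul_right_cancel₀ hQ0 h, fun f => by ring, fun f => ?_, fun f => ?_⟩
  · rw [mul_comp]
    simp only [map_sub, map_neg, map_one]
    simp only [map_sub, map_neg, map_one] at hkey1
    linear_combination f.comp (X - 1) * hkey1
  · rw [mul_comp]
    simp only [map_sub, map_neg, map_one]
    linear_combination (-(f.comp (X + 1))) * hkey2
end

section
/- If 2b is a nonnegative integer, the quotient of the sl₂-module M_b by the submodule S = ℂ[h]·∏_{j=0}^{2b}(h+b-j) is a simple highest weight module isomorphic to L(2b), the finite dimensional simple module of highest weight 2b; in particular its dimension is 2b+1 and the image of ∏_{j=0}^{2b-1}(h+b-j) is a highest weight vector of weight 2b. -/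
open Polynomial

private lemma aux_fac (b : ℂ) (z : ℂ) : X + C b - C z = X - C (z - b) := by
  rw [C_sub]; ring

private lemma aux_monic (b : ℂ) (n : ℕ) :
    (∏ j ∈ Finset.range n, (X + C b - C (j : ℂ))).Monic := by
  apply monic_prod_of_monic
  intro j _
  rw [aux_fac]; exact monic_X_sub_C _

private lemma aux_deg (b : ℂ) (n : ℕ) :
    (∏ j ∈ Finset.range n, (X + C b - C (j : ℂ))).natDegree = n := by
  rw [natDegree_prod _ _ (fun j _ => by rw [aux_fac]; exact X_sub_C_ne_zero _)]
  rw [Finset.sum_congr rfl (fun j _ => by rw [aux_fac, natDegree_X_sub_C]),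
    Finset.sum_const, Finset.card_range, smul_eq_mul, mul_one]

/-- If `2b ∈ ℕ₀`, the quotient of `M_b` by the submodule `S = ℂ[h]·∏_{j=0}^{2b}(h+b-j)`
is a simple module of dimension `2b+1`, and the image of `w = ∏_{j=0}^{2b-1}(h+b-j)`
is a nonzero highest weight vector of weight `2b` (killed by `e`, and `2h·w = 2b·w`
in the quotient); i.e. the quotient is the finite dimensional simple `sl₂`-module
`L(2b)` of highest weight `2b`. -/
theorem Mb_quotient_is_L2b (b : ℂ) (m : ℕ) (hb : 2 * b = (m : ℂ)) :
    let Q : ℂ[X] := ∏ j ∈ Finset.range (m + 1), (X + C b - C (j : ℂ))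
    let S : Submodule ℂ ℂ[X] := Submodule.restrictScalars ℂ (Ideal.span {Q})
    let w : ℂ[X] := ∏ j ∈ Finset.range m, (X + C b - C (j : ℂ))
    Module.finrank ℂ (ℂ[X] ⧸ S) = m + 1 ∧
    w ∉ S ∧
    (X + C b) * w.comp (X - 1) ∈ S ∧
    2 * X * w - C (2 * b) * w ∈ S ∧
    (∀ V : Submodule ℂ ℂ[X], S ≤ V →
      (∀ f ∈ V, X * f ∈ V) →
      (∀ f ∈ V, (X + C b) * f.comp (X - 1) ∈ V) →
      (∀ f ∈ V, -(X - C b) * f.comp (X + 1) ∈ V) →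
      V = S ∨ V = ⊤) := by
  intro Q S w
  have hQmonic : Q.Monic := aux_monic b (m + 1)
  have hQ0 : Q ≠ 0 := hQmonic.ne_zero
  have hQdeg : Q.natDegree = m + 1 := aux_deg b (m + 1)
  have hwdeg : w.natDegree = m := aux_deg b m
  have hw0 : w ≠ 0 := (aux_monic b m).ne_zero
  have hmemS : ∀ p : ℂ[X], p ∈ S ↔ Q ∣ p := fun p => by
    show p ∈ Submodule.restrictScalars ℂ (Ideal.span {Q}) ↔ Q ∣ p
    rw [Submodule.restrictScalars_mem, Ideal.mem_span_singleton]
  have hC2 : (C 2 : ℂ[X]) = 2 := map_ofNat C 2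
  have hCm : C ((m : ℕ) : ℂ) = 2 * C b := by rw [← hb, C_mul, hC2]
  have hQw : Q = w * (X - C b) := by
    show ∏ j ∈ Finset.range (m + 1), (X + C b - C (j : ℂ)) = _
    rw [Finset.prod_range_succ]
    congr 1
    rw [hCm]; ring
  refine ⟨?_, ?_, ?_, ?_, ?_⟩
  · -- finrank
    have e := Submodule.Quotient.restrictScalarsEquiv ℂ
      ((Ideal.span {Q} : Ideal ℂ[X]) : Submodule ℂ[X] ℂ[X])
    rw [show Module.finrank ℂ (ℂ[X] ⧸ S) =
        Module.finrank ℂ (ℂ[X] ⧸ (Ideal.span {Q} : Ideal ℂ[X])) from e.finrank_eq]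
    have := (AdjoinRoot.powerBasis hQ0).finrank
    have h2 : Module.finrank ℂ (AdjoinRoot Q) = m + 1 := by
      simpa [AdjoinRoot.powerBasis, hQdeg] using this
    exact h2
  · -- w ∉ S
    intro hw
    have := Polynomial.natDegree_le_of_dvd ((hmemS w).mp hw) hw0
    rw [hQdeg, hwdeg] at this
    omega
  · -- e · w ∈ S
    have hkey : (X + C b) * w.comp (X - 1) = Q := by
      show _ = ∏ j ∈ Finset.range (m + 1), (X + C b - C (j : ℂ))
      rw [Finset.prod_range_succ']
      show (X + C b) * Polynomial.comp (∏ j ∈ Finset.range m, (X + C b - C (j : ℂ))) (X - 1) = _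
      rw [Polynomial.prod_comp]
      rw [Finset.prod_congr rfl (fun j _ => by
        show (X + C b - C (j : ℂ)).comp (X - 1) = X + C b - C ((j + 1 : ℕ) : ℂ)
        rw [Nat.cast_succ, C_add, C_1]
        simp only [sub_comp, add_comp, X_comp, C_comp, one_comp]
        ring)]
      rw [Nat.cast_zero, C_0, sub_zero]
      ring
    rw [hkey, hmemS]
  · -- weight
    have : 2 * X * w - C (2 * b) * w = C 2 * Q := by
      rw [hQw, C_mul, hC2]; ring
    rw [this, hmemS]
    exact Dvd.intro_left _ rfl
  · -- simplicity
    intro V hSV hXc hE hF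
    have hmul : ∀ g f : ℂ[X], f ∈ V → g * f ∈ V := by
      have hpow : ∀ (k : ℕ) (f : ℂ[X]), f ∈ V → X ^ k * f ∈ V := by
        intro k
        induction k with
        | zero => intro f hf; simpa using hf
        | succ k ih =>
          intro f hf
          have h2 : X ^ (k + 1) * f = X * (X ^ k * f) := by ring
          rw [h2]; exact hXc _ (ih f hf)
      intro g
      induction g using Polynomial.induction_on' with
      | add p q hp hq => intro f hf; rw [add_mul]; exact V.add_mem (hp f hf) (hq f hf)
      | monomial n a =>
        intro f hf
        have h1 : (monomial n a : ℂ[X]) * f = a • (X ^ n * f) := by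
          rw [← C_mul_X_pow_eq_monomial, mul_assoc, ← Polynomial.smul_eq_C_mul]
        rw [h1]; exact V.smul_mem a (hpow n f hf)
    set I : Ideal ℂ[X] := Ideal.span (V : Set ℂ[X]) with hI
    have hIV : ∀ p : ℂ[X], p ∈ I ↔ p ∈ V := by
      intro p
      constructor
      · intro hp
        refine Submodule.span_induction (fun x hx => hx) V.zero_mem
          (fun x y _ _ hx hy => V.add_mem hx hy)
          (fun c x _ hx => by simpa [smul_eq_mul] using hmul c x hx) hp
      · exact fun hp => Ideal.subset_span hp
    obtain ⟨g, hg⟩ := IsPrincipalIdealRing.principal I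
    have hmemI : ∀ p : ℂ[X], p ∈ I ↔ g ∣ p := fun p => by
      rw [hg, Ideal.submodule_span_eq, Ideal.mem_span_singleton]
    have hgV : g ∈ V := (hIV g).1 ((hmemI g).2 dvd_rfl)
    have hQV : Q ∈ V := hSV ((hmemS Q).2 dvd_rfl)
    have hgQ : g ∣ Q := (hmemI Q).1 ((hIV Q).2 hQV)
    have hg0 : g ≠ 0 := fun h => hQ0 (by simpa [h] using hgQ)
    by_cases hu : IsUnit g
    · right
      rw [eq_top_iff]
      intro p _
      have h1 : (1 : ℂ[X]) ∈ V := (hIV 1).1 ((hmemI 1).2 hu.dvd)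
      simpa using hmul p 1 h1
    · left
      have hEg : g ∣ (X + C b) * g.comp (X - 1) := (hmemI _).1 ((hIV _).2 (hE g hgV))
      have hFg : g ∣ (X - C b) * g.comp (X + 1) := by
        have h2 : g ∣ -(X - C b) * g.comp (X + 1) := (hmemI _).1 ((hIV _).2 (hF g hgV))
        rw [neg_mul] at h2
        exact (dvd_neg.mp h2)
      -- every root of g is j - b
      have hrootQ : ∀ z : ℂ, g.IsRoot z → ∃ t : ℕ, t ≤ m ∧ z = (t : ℂ) - b := by
        intro z hz
        obtain ⟨c, hc⟩ := hgQ
        have hQz : Q.eval z = 0 := by rw [hc, eval_mul, hz.eq_zero, zero_mul]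
        rw [show Q = ∏ j ∈ Finset.range (m + 1), (X + C b - C (j : ℂ)) from rfl,
          eval_prod] at hQz
        obtain ⟨j, hj, hj0⟩ := Finset.prod_eq_zero_iff.mp hQz
        simp only [eval_sub, eval_add, eval_X, eval_C] at hj0
        exact ⟨j, Nat.lt_succ_iff.mp (Finset.mem_range.mp hj), by linear_combination hj0⟩
      have hdown : ∀ t : ℕ, g.IsRoot ((t : ℂ) + 1 - b) → g.IsRoot ((t : ℂ) - b) := by
        intro t ht
        have h1 : ((X + C b) * g.comp (X - 1)).eval ((t : ℂ) + 1 - b) = 0 := by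
          obtain ⟨c, hc⟩ := hEg
          rw [hc, eval_mul, ht.eq_zero, zero_mul]
        simp only [eval_mul, eval_comp, eval_add, eval_sub, eval_X, eval_C, eval_one] at h1
        rw [show (t : ℂ) + 1 - b + b = (t : ℂ) + 1 by ring,
          show (t : ℂ) + 1 - b - 1 = (t : ℂ) - b by ring] at h1
        rcases mul_eq_zero.mp h1 with h | h
        · exact absurd h (Nat.cast_add_one_ne_zero t)
        · exact h
      have hup : ∀ t : ℕ, t < m → g.IsRoot ((t : ℂ) - b) → g.IsRoot ((t : ℂ) + 1 - b) := by
        intro t htm ht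
        have h1 : ((X - C b) * g.comp (X + 1)).eval ((t : ℂ) - b) = 0 := by
          obtain ⟨c, hc⟩ := hFg
          rw [hc, eval_mul, ht.eq_zero, zero_mul]
        simp only [eval_mul, eval_comp, eval_add, eval_sub, eval_X, eval_C, eval_one] at h1
        rw [show (t : ℂ) - b - b = (t : ℂ) - (m : ℂ) by rw [← hb]; ring,
          show (t : ℂ) - b + 1 = (t : ℂ) + 1 - b by ring] at h1
        rcases mul_eq_zero.mp h1 with h | h
        · exfalso
          have : (t : ℂ) = (m : ℂ) := by linear_combination h
          exact absurd (Nat.cast_inj.mp this) (by omega)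
        · exact h
      -- existence of a root
      have hdegne : g.degree ≠ 0 := fun h => hu (Polynomial.isUnit_iff_degree_eq_zero.mpr h)
      have hdegpos : 0 < g.degree :=
        lt_of_le_of_ne (Polynomial.zero_le_degree_iff.mpr hg0) (Ne.symm hdegne)
      obtain ⟨z, hz⟩ := Complex.exists_root hdegpos
      obtain ⟨t0, ht0m, rfl⟩ := hrootQ z hz
      -- descend to 0
      have hbase : g.IsRoot ((0 : ℕ) - b : ℂ) := by
        clear ht0m
        induction t0 with
        | zero => simpa using hz
        | succ t ih =>
          apply ih
          apply hdown t
          rw [Nat.cast_succ] at hz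
          exact hz
      -- ascend to all t ≤ m
      have hall : ∀ t : ℕ, t ≤ m → g.IsRoot ((t : ℂ) - b) := by
        intro t
        induction t with
        | zero => intro _; simpa using hbase
        | succ t ih =>
          intro hle
          have h := hup t (by omega) (ih (by omega))
          rw [Nat.cast_succ]
          exact h
      have hQg : Q ∣ g := by
        have hdvd : ∀ j ∈ Finset.range (m + 1), (X - C ((j : ℂ) - b)) ∣ g := fun j hj =>
          dvd_iff_isRoot.mpr (hall j (Nat.lt_succ_iff.mp (Finset.mem_range.mp hj)))
        have hinj : Function.Injective (fun j : ℕ => (j : ℂ) - b) := by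
          intro a c h
          exact (Nat.cast_inj (R := ℂ)).mp (by simpa using sub_left_inj.mp h)
        have hcop := (Polynomial.pairwise_coprime_X_sub_C hinj).set_pairwise
          (↑(Finset.range (m + 1)))
        have := Finset.prod_dvd_of_coprime hcop hdvd
        rwa [show ∏ j ∈ Finset.range (m + 1), (X - C ((j : ℂ) - b)) = Q from
          (Finset.prod_congr rfl fun j _ => (aux_fac b j).symm)] at this
      apply le_antisymm _ hSV
      intro p hp
      exact (hmemS p).mpr (dvd_trans hQg ((hmemI p).1 ((hIV p).2 hp)))
end

section
/- Let L(1) = ℂ² be the natural 2-dimensional sl₂-module. For b ∈ ℂ with 2b ≠ -1, the tensor product M'_b ⊗ L(1) decomposes as a direct sum of sl₂-modules isomorphic to M'_{b-1/2} ⊕ M'_{b+1/2}; explicitly, the maps f(h) ↦ ((h-b)f(h+1/2), f(h-1/2)) and f(h) ↦ ((h+b+1)f(h+1/2), f(h-1/2)) are injective sl₂-module homomorphisms from M'_{b-1/2} and M'_{b+1/2} respectively into M'_b ⊗ L(1), and their images are complementary submodules. -/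
open Polynomial

private lemma comp_sub_inj (c : ℂ) {f g : ℂ[X]} (h : f.comp (X - C c) = g.comp (X - C c)) :
    f = g := by
  apply Polynomial.funext; intro x
  have := congrArg (eval (x + c)) h
  simpa [eval_comp] using this


/-- For `2b ≠ -1`, the tensor product `M'_b ⊗ L(1)` (realized on pairs
`(f,g) = f⊗e₁ + g⊗e₂` of polynomials with the explicit action below) decomposes
as `M'_{b-1/2} ⊕ M'_{b+1/2}`: the maps
`Φ₁ : f(h) ↦ ((h-b)f(h+1/2), f(h-1/2))` and `Φ₂ : f(h) ↦ ((h+b+1)f(h+1/2), f(h-1/2))`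
are injective `sl₂`-module homomorphisms from `M'_{b-1/2}` resp. `M'_{b+1/2}` into
`M'_b ⊗ L(1)`, and their images are complementary submodules. -/
theorem Mb'_tensor_L1_decomposition (b : ℂ) (hb : 2 * b ≠ -1) :
    -- action of sl₂ on M'_b ⊗ L(1), on pairs (f,g)
    let Ht : ℂ[X] × ℂ[X] → ℂ[X] × ℂ[X] := fun p =>
      ((X + C 2⁻¹) * p.1, (X - C 2⁻¹) * p.2)
    let Et : ℂ[X] × ℂ[X] → ℂ[X] × ℂ[X] := fun p =>
      (p.1.comp (X - 1) + p.2, p.2.comp (X - 1))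
    let Ft : ℂ[X] × ℂ[X] → ℂ[X] × ℂ[X] := fun p =>
      (-((X + C b + 1) * (X - C b)) * p.1.comp (X + 1),
       -((X + C b + 1) * (X - C b)) * p.2.comp (X + 1) + p.1)
    -- the f-action in M'_c
    let F' : ℂ → ℂ[X] → ℂ[X] := fun c g => -((X + C c + 1) * (X - C c)) * g.comp (X + 1)
    let Φ₁ : ℂ[X] → ℂ[X] × ℂ[X] := fun f =>
      ((X - C b) * f.comp (X + C 2⁻¹), f.comp (X - C 2⁻¹))
    let Φ₂ : ℂ[X] → ℂ[X] × ℂ[X] := fun f =>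
      ((X + C b + 1) * f.comp (X + C 2⁻¹), f.comp (X - C 2⁻¹))
    Function.Injective Φ₁ ∧ Function.Injective Φ₂ ∧
    -- Φ₁ is a module homomorphism from M'_{b - 1/2}
    (∀ f : ℂ[X], Φ₁ (X * f) = Ht (Φ₁ f)) ∧
    (∀ f : ℂ[X], Φ₁ (f.comp (X - 1)) = Et (Φ₁ f)) ∧
    (∀ f : ℂ[X], Φ₁ (F' (b - 2⁻¹) f) = Ft (Φ₁ f)) ∧
    -- Φ₂ is a module homomorphism from M'_{b + 1/2}
    (∀ f : ℂ[X], Φ₂ (X * f) = Ht (Φ₂ f)) ∧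
    (∀ f : ℂ[X], Φ₂ (f.comp (X - 1)) = Et (Φ₂ f)) ∧
    (∀ f : ℂ[X], Φ₂ (F' (b + 2⁻¹) f) = Ft (Φ₂ f)) ∧
    -- the images are complementary
    (∀ p : ℂ[X] × ℂ[X], ∃ f g : ℂ[X], p = Φ₁ f + Φ₂ g) ∧
    (∀ f g : ℂ[X], Φ₁ f = Φ₂ g → f = 0 ∧ g = 0) := by
  intro Ht Et Ft F' Φ₁ Φ₂
  have hb' : (2 * b + 1 : ℂ) ≠ 0 := fun h => hb (by linear_combination h)
  refine ⟨?_, ?_, ?_, ?_, ?_, ?_, ?_, ?_, ?_, ?_⟩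
  · intro f g h
    exact comp_sub_inj 2⁻¹ (congrArg Prod.snd h)
  · intro f g h
    exact comp_sub_inj 2⁻¹ (congrArg Prod.snd h)
  · intro f
    show ((X - C b) * ((X * f).comp (X + C 2⁻¹)), (X * f).comp (X - C 2⁻¹)) = _
    refine Prod.ext ?_ ?_ <;>
    · apply Polynomial.funext; intro x
      simp [eval_comp, Ht, Et, Ft, Φ₁, Φ₂]; try ring_nf
  · intro f
    show ((X - C b) * ((f.comp (X - 1)).comp (X + C 2⁻¹)), (f.comp (X - 1)).comp (X - C 2⁻¹)) = _
    refine Prod.ext ?_ ?_ <;>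
    · apply Polynomial.funext; intro x
      simp [eval_comp, Ht, Et, Ft, Φ₁, Φ₂]; try ring_nf
  · intro f
    show ((X - C b) * ((F' (b - 2⁻¹) f).comp (X + C 2⁻¹)), (F' (b - 2⁻¹) f).comp (X - C 2⁻¹)) = _
    show ((X - C b) * ((-((X + C (b - 2⁻¹) + 1) * (X - C (b - 2⁻¹))) * f.comp (X + 1)).comp (X + C 2⁻¹)),
      (-((X + C (b - 2⁻¹) + 1) * (X - C (b - 2⁻¹))) * f.comp (X + 1)).comp (X - C 2⁻¹)) = _
    refine Prod.ext ?_ ?_ <;>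
    · apply Polynomial.funext; intro x
      simp [eval_comp, Ht, Et, Ft, Φ₁, Φ₂]; try ring_nf
  · intro f
    show ((X + C b + 1) * ((X * f).comp (X + C 2⁻¹)), (X * f).comp (X - C 2⁻¹)) = _
    refine Prod.ext ?_ ?_ <;>
    · apply Polynomial.funext; intro x
      simp [eval_comp, Ht, Et, Ft, Φ₁, Φ₂]; try ring_nf
  · intro f
    show ((X + C b + 1) * ((f.comp (X - 1)).comp (X + C 2⁻¹)), (f.comp (X - 1)).comp (X - C 2⁻¹)) = _
    refine Prod.ext ?_ ?_ <;>
    · apply Polynomial.funext; intro x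
      simp [eval_comp, Ht, Et, Ft, Φ₁, Φ₂]; try ring_nf
  · intro f
    show ((X + C b + 1) * ((-((X + C (b + 2⁻¹) + 1) * (X - C (b + 2⁻¹))) * f.comp (X + 1)).comp (X + C 2⁻¹)),
      (-((X + C (b + 2⁻¹) + 1) * (X - C (b + 2⁻¹))) * f.comp (X + 1)).comp (X - C 2⁻¹)) = _
    refine Prod.ext ?_ ?_ <;>
    · apply Polynomial.funext; intro x
      simp [eval_comp, Ht, Et, Ft, Φ₁, Φ₂]; try ring_nf
  · intro p
    refine ⟨p.2.comp (X + C 2⁻¹) - C (2*b+1)⁻¹ * (p.1.comp (X - C 2⁻¹) - (X - C b - C 2⁻¹) * p.2.comp (X + C 2⁻¹)),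
      C (2*b+1)⁻¹ * (p.1.comp (X - C 2⁻¹) - (X - C b - C 2⁻¹) * p.2.comp (X + C 2⁻¹)), ?_⟩
    show p = ((X - C b) * _ + (X + C b + 1) * _, _ + _)
    refine Prod.ext ?_ ?_ <;>
    · apply Polynomial.funext; intro x
      simp [eval_comp, Φ₁, Φ₂]
      try field_simp [show (b * 2 + 1 : ℂ) ≠ 0 from fun h => hb' (by linear_combination h)]
      try ring_nf
      try ring
  · intro f g h
    have h2 : f = g := comp_sub_inj 2⁻¹ (congrArg Prod.snd h)
    subst h2
    have h1 : (X - C b) * f.comp (X + C 2⁻¹) = (X + C b + 1) * f.comp (X + C 2⁻¹) :=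
      congrArg Prod.fst h
    have key : (C b * 2 + 1) * (f.comp (X + C 2⁻¹)) = 0 := by linear_combination -h1
    have hC : (C b * 2 + 1 : ℂ[X]) ≠ 0 := by
      intro h
      have := congrArg (eval 0) h
      simp at this
      exact hb' (by linear_combination this)
    have hu : f.comp (X + C 2⁻¹) = 0 := by
      rcases mul_eq_zero.mp key with h | h
      · exact absurd h hC
      · exact h
    have hf : f = 0 := by
      apply Polynomial.funext; intro x
      have := congrArg (eval (x - 2⁻¹)) hu
      simpa [eval_comp, sub_add_cancel] using this
    exact ⟨hf, hf⟩
end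

section
/- If p, q ∈ ℂ[h] satisfy q·σ⁻¹(p) = -(h+b+1)(h-b) for some b ∈ ℂ (where σ⁻¹(p)(h) = p(h+1)), then the pair (deg p, deg q) belongs to {(2,0),(0,2),(1,1)}, and up to a nonzero scalar a ∈ ℂ*, (p,q) is one of: (a, -a⁻¹(h+b+1)(h-b)), (a(h+b)(h-b-1), -a⁻¹), (a(h+b), -a⁻¹(h-b)), or (a(h-b-1), -a⁻¹(h+b+1)). -/
open Polynomial

private lemma quad_coeffs {a b c a' b' c' : ℂ}
    (h : C a * X^2 + C b * X + C c = C a' * X^2 + C b' * X + C c') :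
    a = a' ∧ b = b' ∧ c = c' := by
  refine ⟨?_, ?_, ?_⟩
  · simpa using congrArg (fun f => Polynomial.coeff f 2) h
  · simpa using congrArg (fun f => Polynomial.coeff f 1) h
  · simpa using congrArg (fun f => Polynomial.coeff f 0) h

private lemma comp_shift (p : ℂ[X]) : (p.comp (X+1)).comp (X-1) = p := by
  rw [comp_assoc]; simp

/-- If `p, q ∈ ℂ[h]` satisfy `q·σ⁻¹(p) = -(h+b+1)(h-b)`, then
`(deg p, deg q) ∈ {(2,0),(0,2),(1,1)}` and, up to a nonzero scalar `a`,
`(p,q)` is one of `(a, -a⁻¹(h+b+1)(h-b))`, `(a(h+b)(h-b-1), -a⁻¹)`,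
`(a(h+b), -a⁻¹(h-b))`, `(a(h-b-1), -a⁻¹(h+b+1))`. -/
theorem pq_factorization (b : ℂ) (p q : ℂ[X])
    (h : q * p.comp (X + 1) = -((X + C b + 1) * (X - C b))) :
    ((p.natDegree, q.natDegree) = (2, 0) ∨ (p.natDegree, q.natDegree) = (0, 2) ∨
      (p.natDegree, q.natDegree) = (1, 1)) ∧
    ∃ a : ℂ, a ≠ 0 ∧
      ((p = C a ∧ q = -(C a⁻¹ * ((X + C b + 1) * (X - C b)))) ∨
       (p = C a * ((X + C b) * (X - C b - 1)) ∧ q = -(C a⁻¹)) ∨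
       (p = C a * (X + C b) ∧ q = -(C a⁻¹ * (X - C b))) ∨
       (p = C a * (X - C b - 1) ∧ q = -(C a⁻¹ * (X + C b + 1)))) := by
  have hRform : (-((X + C b + 1) * (X - (C b : ℂ[X]))))
      = C (-1) * X^2 + C (-1) * X + C (b*(b+1)) := by
    simp only [map_neg, map_one, map_mul, map_add]; ring
  have hR2 : (-((X + C b + 1) * (X - (C b : ℂ[X])))).natDegree = 2 := by
    rw [hRform]; compute_degree!
  have hRne : (-((X + C b + 1) * (X - (C b : ℂ[X])))) ≠ 0 := by
    intro h0; rw [h0] at hR2; simp at hR2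
  have hq0 : q ≠ 0 := by rintro rfl; rw [zero_mul] at h; exact hRne h.symm
  have hP0 : p.comp (X+1) ≠ 0 := by
    intro h0; rw [h0, mul_zero] at h; exact hRne h.symm
  have hp0 : p ≠ 0 := by rintro rfl; simp at hP0
  have hX1 : ((X : ℂ[X]) + 1).natDegree = 1 := by compute_degree!
  have hPd : (p.comp (X+1)).natDegree = p.natDegree := by
    simp [natDegree_comp, hX1]
  have hdeg : q.natDegree + p.natDegree = 2 := by
    rw [← hPd, ← natDegree_mul hq0 hP0, h, hR2]
  have hq2 : q.natDegree = 0 ∨ q.natDegree = 1 ∨ q.natDegree = 2 := by omega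
  rcases hq2 with hqn | hqn | hqn
  · -- q constant, deg p = 2
    have hpn : p.natDegree = 2 := by omega
    set c := q.coeff 0 with hc
    have hq' : q = C c := (Polynomial.eq_C_of_natDegree_eq_zero hqn)
    have hcne : c ≠ 0 := by rintro h0; rw [h0, map_zero] at hq'; exact hq0 hq'
    rw [hq'] at h
    have h' : C c * p = (-((X + C b + 1) * (X - C b))).comp (X-1) := by
      have := congrArg (fun r : ℂ[X] => r.comp (X-1)) h
      simpa [mul_comp, C_comp, comp_shift] using this
    refine ⟨by simp [hpn, hqn], -c⁻¹, by simpa using hcne, ?_⟩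
    right; left
    constructor
    · apply mul_left_cancel₀ (show (C c : ℂ[X]) ≠ 0 by simpa using hcne)
      rw [h']
      have h2 : C c * (C (-c⁻¹) * ((X + C b) * (X - C b - 1)))
          = -((X + C b) * (X - C b - 1)) := by
        rw [← mul_assoc, ← C_mul]
        field_simp
        rw [map_neg, C_1, neg_one_mul]
      rw [h2]
      simp only [neg_comp, mul_comp, add_comp, sub_comp, one_comp, X_comp, C_comp]
      ring
    · rw [hq']
      have : (-c⁻¹)⁻¹ = -c := by field_simp
      rw [this]; simp
  · -- both linear
    have hpn : p.natDegree = 1 := by omega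
    set u := q.coeff 1 with hu0; set v := q.coeff 0 with hv0
    set s := p.coeff 1 with hs0; set t := p.coeff 0 with ht0
    have hq' : q = C u * X + C v := q.eq_X_add_C_of_natDegree_le_one (by omega)
    have hp' : p = C s * X + C t := p.eq_X_add_C_of_natDegree_le_one (by omega)
    have key : C (u*s) * X^2 + C (u*s+u*t+v*s) * X + C (v*(s+t))
        = C (-1) * X^2 + C (-1) * X + C (b*(b+1)) := by
      rw [← hRform, ← h, hq', hp']
      simp only [add_comp, mul_comp, C_comp, X_comp, map_mul, map_add]
      ring
    obtain ⟨e2, e1, e0⟩ := quad_coeffs key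
    have hs : s ≠ 0 := by intro h0; rw [h0, mul_zero] at e2; exact one_ne_zero (neg_eq_zero.mp e2.symm)
    have hmid : u * s * t + v * s * s = 0 := by linear_combination s * e1 - s * e2
    have hvs : v * s^2 = t := by linear_combination hmid - t * e2
    have hfac : (t - s*b) * (t + s*(b+1)) = 0 := by
      linear_combination s^2 * e0 - (s+t) * hvs
    have hu : u = -s⁻¹ := by field_simp; linear_combination e2
    refine ⟨by simp [hpn, hqn], s, hs, ?_⟩
    rcases mul_eq_zero.mp hfac with ht | ht
    · right; right; left
      have ht' : t = s * b := by linear_combination ht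
      have h4 : v * s = b := by
        apply mul_right_cancel₀ hs
        linear_combination hvs + ht
      have hv' : v = s⁻¹ * b := by field_simp; linear_combination h4
      constructor
      · rw [hp', ht']; simp only [map_mul]; ring
      · rw [hq', hu, hv']; simp only [map_neg, map_mul]; ring
    · right; right; right
      have ht' : t = -(s * (b+1)) := by linear_combination ht
      have h4 : v * s = -(b+1) := by
        apply mul_right_cancel₀ hs
        linear_combination hvs + ht
      have hv' : v = -(s⁻¹ * (b+1)) := by field_simp; linear_combination h4
      constructor
      · rw [hp', ht']; simp only [map_neg, map_mul, map_add, map_one]; ring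
      · rw [hq', hu, hv']; simp only [map_neg, map_mul, map_add, map_one]; ring
  · -- q deg 2, p constant
    have hpn : p.natDegree = 0 := by omega
    set d := p.coeff 0 with hd
    have hp' : p = C d := (Polynomial.eq_C_of_natDegree_eq_zero hpn)
    have hdne : d ≠ 0 := by rintro h0; rw [h0, map_zero] at hp'; exact hp0 hp'
    refine ⟨by simp [hpn, hqn], d, hdne, ?_⟩
    left
    refine ⟨hp', ?_⟩
    have hPc : p.comp (X+1) = C d := by rw [hp']; simp
    rw [hPc] at h
    apply mul_right_cancel₀ (show (C d : ℂ[X]) ≠ 0 by simpa using hdne)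
    rw [h]
    have h1 : (C d⁻¹ : ℂ[X]) * C d = 1 := by
      rw [← C_mul, inv_mul_cancel₀ hdne, C_1]
    calc -((X + C b + 1) * (X - C b))
        = -((C d⁻¹ * C d) * ((X + C b + 1) * (X - C b))) := by rw [h1, one_mul]
      _ = -(C d⁻¹ * ((X + C b + 1) * (X - C b))) * C d := by ring
end

section
/- For n > 1, the sl_{n+1}-modules M_b^S and M_{b'}^{S'} (defined on P = ℂ[h₁,...,hₙ] as in Definition of M_b^S) are isomorphic if and only if b = b' and S = S'. More precisely: any sl_{n+1}-module isomorphism φ : M_b^S → M_{b'}^{S'} that is also a map of ℂ[h₁,...,hₙ]-modules is multiplication by a nonzero constant, and its existence forces the polynomials p_i := e_{i,n+1}·1 to agree in both modules for every i, which forces b = b' and S = S'. -/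
open MvPolynomial

/-- The shift `σ_i : h_i ↦ h_i - 1` on `ℂ[h₁,…,hₙ]`. -/
noncomputable def shiftDown (n : ℕ) (i : Fin n) :
    MvPolynomial (Fin n) ℂ →ₐ[ℂ] MvPolynomial (Fin n) ℂ :=
  aeval fun k : Fin n => X k - if k = i then 1 else 0

/-- The inverse shift `σ_i⁻¹ : h_i ↦ h_i + 1` on `ℂ[h₁,…,hₙ]`. -/
noncomputable def shiftUp (n : ℕ) (i : Fin n) :
    MvPolynomial (Fin n) ℂ →ₐ[ℂ] MvPolynomial (Fin n) ℂ :=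
  aeval fun k : Fin n => X k + if k = i then 1 else 0

/-- `h̄ = h₁ + ⋯ + hₙ`. -/
noncomputable def hbar (n : ℕ) : MvPolynomial (Fin n) ℂ := ∑ t : Fin n, X t

/-- The action of `e_{i,n+1}` on `M_b^S`. -/
noncomputable def Eop (n : ℕ) (b : ℂ) (S : Finset (Fin n)) (i : Fin n)
    (f : MvPolynomial (Fin n) ℂ) : MvPolynomial (Fin n) ℂ :=
  (hbar n + C b) * (if i ∈ S then 1 else X i - C b - 1) * shiftDown n i f

/-- The action of `e_{n+1,j}` on `M_b^S`. -/
noncomputable def Fop (n : ℕ) (b : ℂ) (S : Finset (Fin n)) (j : Fin n)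
    (f : MvPolynomial (Fin n) ℂ) : MvPolynomial (Fin n) ℂ :=
  -(if j ∈ S then X j - C b else 1) * shiftUp n j f

/-- The action of `e_{i,j}` (`i ≠ j ≤ n`) on `M_b^S`. -/
noncomputable def EijOp (n : ℕ) (b : ℂ) (S : Finset (Fin n)) (i j : Fin n)
    (f : MvPolynomial (Fin n) ℂ) : MvPolynomial (Fin n) ℂ :=
  (if i ∈ S then 1 else X i - C b - 1) * (if j ∈ S then X j - C b else 1) *
    shiftDown n i (shiftUp n j f)

lemma mv_unit_eq_C {R : Type*} [CommRing R] [IsDomain R] :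
    ∀ {n : ℕ} {p : MvPolynomial (Fin n) R}, IsUnit p → ∃ r : R, p = C r := by
  intro n
  induction n with
  | zero => exact fun {p} _ => ⟨_, eq_C_of_isEmpty p⟩
  | succ n ih =>
    intro p hp
    have hq : IsUnit (finSuccEquiv R n p) := hp.map (finSuccEquiv R n)
    obtain ⟨r, hru, hrC⟩ := Polynomial.isUnit_iff.mp hq
    obtain ⟨a, ha⟩ := ih hru
    refine ⟨a, ?_⟩
    have h1 := congrArg (finSuccEquiv R n).symm hrC
    rw [AlgEquiv.symm_apply_apply] at h1
    rw [← h1, ha]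
    have h2 := congrArg (fun f : R →+* MvPolynomial (Fin (n+1)) R => f a)
      (finSuccEquiv_comp_C_eq_C n)
    simpa using h2

/-- For `n > 1`, any isomorphism of `sl_{n+1}`-modules `φ : M_b^S → M_{b'}^{S'}` which
is also a map of `ℂ[h₁,…,hₙ]`-modules is multiplication by a nonzero constant, and its
existence forces `b = b'` and `S = S'`. In particular `M_b^S ≅ M_{b'}^{S'}` iff
`b = b'` and `S = S'`. -/
theorem MbS_iso_classification (n : ℕ) (hn : 1 < n) (b b' : ℂ) (S S' : Finset (Fin n))
    (φ : MvPolynomial (Fin n) ℂ ≃ₗ[ℂ] MvPolynomial (Fin n) ℂ)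
    (hmul : ∀ f g : MvPolynomial (Fin n) ℂ, φ (f * g) = f * φ g)
    (hE : ∀ (i : Fin n) (f), φ (Eop n b S i f) = Eop n b' S' i (φ f))
    (hF : ∀ (j : Fin n) (f), φ (Fop n b S j f) = Fop n b' S' j (φ f))
    (hEij : ∀ (i j : Fin n), i ≠ j → ∀ f, φ (EijOp n b S i j f) = EijOp n b' S' i j (φ f)) :
    (∃ c : ℂ, c ≠ 0 ∧ ∀ f, φ f = c • f) ∧ b = b' ∧ S = S' := by
  classical
  have hphi : ∀ f, φ f = f * φ 1 := fun f => by simpa using hmul f 1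
  have hunit : IsUnit (φ 1) := by
    refine IsUnit.of_mul_eq_one (φ.symm 1) ?_
    have h := hphi (φ.symm 1)
    rw [φ.apply_symm_apply] at h
    rw [mul_comm]; exact h.symm
  obtain ⟨c, hc⟩ := mv_unit_eq_C hunit
  have hcne : c ≠ 0 := by
    intro h0
    have : φ 1 = 0 := by rw [hc, h0, map_zero]
    have h1 : (1 : MvPolynomial (Fin n) ℂ) = 0 := by
      simpa using congrArg φ.symm this
    exact one_ne_zero h1
  have key : ∀ i : Fin n,
      (hbar n + C b) * (if i ∈ S then 1 else X i - C b - 1) =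
      (hbar n + C b') * (if i ∈ S' then 1 else X i - C b' - 1) := by
    intro i
    have h := hE i 1
    rw [hphi (Eop n b S i 1), hc] at h
    have hsd1 : shiftDown n i (1 : MvPolynomial (Fin n) ℂ) = 1 := map_one _
    have hsdC : shiftDown n i (C c) = C c := by
      simp [shiftDown]
    unfold Eop at h
    rw [hsd1, hsdC, mul_one] at h
    have hCne : (C c : MvPolynomial (Fin n) ℂ) ≠ 0 := by
      simpa using hcne
    exact mul_right_cancel₀ hCne h
  haveI : Nontrivial (Fin n) := Fin.nontrivial_iff_two_le.mpr hn
  have main : ∀ i : Fin n, b = b' ∧ (i ∈ S ↔ i ∈ S') := by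
    intro i
    obtain ⟨j, hj⟩ := exists_ne i
    set x : ℂ → ℂ → Fin n → ℂ :=
      fun s t k => if k = i then t else if k = j then s - t else 0 with hx
    have hsum : ∀ s t : ℂ,
        (∑ k : Fin n, if k = i then t else if k = j then s - t else 0) = s := by
      intro s t
      have hfun : ∀ k : Fin n,
          (if k = i then t else if k = j then s - t else 0) =
          (if k = i then t else 0) + (if k = j then s - t else 0) := by
        intro k
        by_cases h1 : k = i
        · subst h1; simp [Ne.symm hj]
        · rw [if_neg h1, if_neg h1, zero_add]
      rw [Finset.sum_congr rfl fun k _ => hfun k, Finset.sum_add_distrib]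
      simp [Finset.sum_ite_eq']
    have heval : ∀ s t : ℂ,
        (s + b) * (if i ∈ S then 1 else t - b - 1) =
        (s + b') * (if i ∈ S' then 1 else t - b' - 1) := by
      intro s t
      have h := congrArg (eval (x s t)) (key i)
      simp only [hbar, map_mul, map_add, map_sub, map_one, eval_C, eval_X, map_sum,
        apply_ite (eval (x s t)), hx] at h
      simp only [apply_ite (eval _), eval_X, eval_C, map_sub, map_one] at h
      rw [hsum s t] at h
      exact h
    by_cases h1 : i ∈ S <;> by_cases h2 : i ∈ S' <;>
      simp only [h1, h2, if_true, if_false, if_pos, if_neg] at heval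
    · exact ⟨by simpa using heval 0 0, by simp [h1, h2]⟩
    · exfalso
      have e0 := heval 0 (b' + 1)
      have e1 := heval 1 (b' + 1)
      have : (1 : ℂ) = 0 := by ring_nf at e0 e1 ⊢; linear_combination e1 - e0
      exact one_ne_zero this
    · exfalso
      have e0 := heval 0 (b + 1)
      have e1 := heval 1 (b + 1)
      have : (1 : ℂ) = 0 := by linear_combination e0 - e1
      exact one_ne_zero this
    · refine ⟨?_, by simp [h1, h2]⟩
      have e0 := heval 0 0
      have e1 := heval 1 0
      linear_combination e0 - e1
  have hb : b = b' := (main ⟨0, by omega⟩).1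
  have hS : S = S' := Finset.ext fun i => (main i).2
  refine ⟨⟨c, hcne, fun f => ?_⟩, hb, hS⟩
  rw [hphi f, hc, smul_eq_C_mul]
  ring
end
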